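/- Assume l(k) and d(k) are both not identically zero as polynomials in k. Then the ℂ-linear map P : ℂ[x]^N → ℂ[x]^N has finite-dimensional kernel and cokernel over ℂ, and its index equals N·n', i.e. χ(P; ℂ[x]^N) = dim ker P − dim coker P = N·min_{0≤i≤m}(i − d°A_i). -/

import Mathlib

open Polynomial PowerSeries

noncomputable section

/-- ν(A): minimum over the entries of a polynomial matrix of the order of vanishing
at `x = 0` (`⊤` for the zero matrix), as a natural number via `toNat`. -/
def matNu {N : ℕ} (A : Matrix (Fin N) (Fin N) (Polynomial ℂ)) : ℕ :=
  (⨅ i, ⨅ j, (A i j).trailingDegree).toNat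

/-- The coefficient matrix `A^{ν(A)}` of `x^{ν(A)}` in `A`. -/
def trailMat {N : ℕ} (A : Matrix (Fin N) (Fin N) (Polynomial ℂ)) : Matrix (Fin N) (Fin N) ℂ :=
  fun i j => (A i j).coeff (matNu A)

open Classical in
/-- The matrix `L(k) = Σ_{j ∈ J} k(k-1)⋯(k-j+1) A_j^{n_j}`, where
`J = {j : A_j ≠ 0 ∧ j - ν(A_j) = n}`. -/
def Lmat {N m : ℕ} (A : Fin (m + 1) → Matrix (Fin N) (Fin N) (Polynomial ℂ)) (n : ℤ)
    (k : ℂ) : Matrix (Fin N) (Fin N) ℂ :=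
  ∑ j : Fin (m + 1),
    if A j ≠ 0 ∧ (j : ℤ) - matNu (A j) = n then
      (∏ t ∈ Finset.range (j : ℕ), (k - t)) • trailMat (A j)
    else 0

/-- The differential operator `P = Σ_{i=0}^m A_i(x) (d/dx)^i` acting ℂ-linearly on
`ℂ[[x]]^N`. -/
def Pop {N m : ℕ} (A : Fin (m + 1) → Matrix (Fin N) (Fin N) (Polynomial ℂ)) :
    Module.End ℂ (Fin N → PowerSeries ℂ) :=
  ∑ i : Fin (m + 1),
    LinearMap.pi fun b : Fin N =>
      ∑ c : Fin N,
        (LinearMap.mulLeft ℂ ((A i b c : Polynomial ℂ) : PowerSeries ℂ) ∘ₗ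
            (((PowerSeries.derivative ℂ).toLinearMap : Module.End ℂ (PowerSeries ℂ)) ^ (i : ℕ))) ∘ₗ
          LinearMap.proj c

/-- A formal power series is convergent if it has positive radius of convergence. -/
def PSConvergent (f : PowerSeries ℂ) : Prop :=
  ∃ r : ℝ, 0 < r ∧ Summable fun j : ℕ => ‖PowerSeries.coeff j f‖ * r ^ j

end

noncomputable section

/-- `d°A`: the maximum over the entries of a polynomial matrix of their degrees
(as a natural number; meaningful for `A ≠ 0`). -/
def matDeg {N : ℕ} (A : Matrix (Fin N) (Fin N) (Polynomial ℂ)) : ℕ :=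
  Finset.univ.sup fun p : Fin N × Fin N => (A p.1 p.2).natDegree

/-- The coefficient matrix `A^{d°A}` of `x^{d°A}` in `A`. -/
def leadMat {N : ℕ} (A : Matrix (Fin N) (Fin N) (Polynomial ℂ)) : Matrix (Fin N) (Fin N) ℂ :=
  fun i j => (A i j).coeff (matDeg A)

open Classical in
/-- The matrix `D(k) = Σ_{j ∈ J'} k(k-1)⋯(k-j+1) A_j^{d_j}`, where
`J' = {j : A_j ≠ 0 ∧ j - d°(A_j) = n'}`. -/
def Dmat {N m : ℕ} (A : Fin (m + 1) → Matrix (Fin N) (Fin N) (Polynomial ℂ)) (n' : ℤ)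
    (k : ℂ) : Matrix (Fin N) (Fin N) ℂ :=
  ∑ j : Fin (m + 1),
    if A j ≠ 0 ∧ (j : ℤ) - matDeg (A j) = n' then
      (∏ t ∈ Finset.range (j : ℕ), (k - t)) • leadMat (A j)
    else 0

/-- The differential operator `P = Σ_{i=0}^m A_i(x) (d/dx)^i` acting ℂ-linearly on
`ℂ[x]^N`. -/
def PopPoly {N m : ℕ} (A : Fin (m + 1) → Matrix (Fin N) (Fin N) (Polynomial ℂ)) :
    Module.End ℂ (Fin N → Polynomial ℂ) :=
  ∑ i : Fin (m + 1),
    LinearMap.pi fun b : Fin N =>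
      ∑ c : Fin N,
        (LinearMap.mulLeft ℂ (A i b c) ∘ₗ
            ((Polynomial.derivative : Module.End ℂ (Polynomial ℂ)) ^ (i : ℕ))) ∘ₗ
          LinearMap.proj c

end

noncomputable section IndexAux

lemma PopPoly_apply {N m : ℕ} (A : Fin (m + 1) → Matrix (Fin N) (Fin N) (Polynomial ℂ))
    (u : Fin N → Polynomial ℂ) (b : Fin N) :
    (PopPoly A u) b = ∑ i : Fin (m + 1), ∑ c : Fin N,
      A i b c * (Polynomial.derivative^[(i : ℕ)] (u c)) := by
  simp [PopPoly, LinearMap.sum_apply, LinearMap.pi_apply, LinearMap.comp_apply,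
    LinearMap.mulLeft_apply, LinearMap.proj_apply, Module.End.pow_apply, Finset.sum_apply]

lemma coeff_iter_deriv (p : Polynomial ℂ) (i t : ℕ) :
    (Polynomial.derivative^[i] p).coeff t
      = (∏ r ∈ Finset.range i, ((t + r + 1 : ℕ) : ℂ)) * p.coeff (t + i) := by
  induction i generalizing t with
  | zero => simp
  | succ i ih =>
    rw [Function.iterate_succ_apply', Polynomial.coeff_derivative, ih, Finset.prod_range_succ']
    simp only [show ∀ r : ℕ, t + 1 + r + 1 = t + (r + 1) + 1 from fun r => by omega]
    rw [show t + 1 + i = t + (i + 1) by omega]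
    push_cast
    ring

lemma prod_shift (s i : ℕ) (h : i ≤ s) :
    (∏ r ∈ Finset.range i, ((s - i + r + 1 : ℕ) : ℂ)) = ∏ r ∈ Finset.range i, ((s : ℂ) - r) := by
  calc (∏ r ∈ Finset.range i, ((s - i + r + 1 : ℕ) : ℂ))
      = ∏ r ∈ Finset.range i, ((s - (i - 1 - r) : ℕ) : ℂ) := by
        refine Finset.prod_congr rfl fun r hr => ?_
        simp only [Finset.mem_range] at hr
        congr 1
        omega
    _ = ∏ r ∈ Finset.range i, ((s - r : ℕ) : ℂ) :=
        Finset.prod_range_reflect (fun r => ((s - r : ℕ) : ℂ)) i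
    _ = ∏ r ∈ Finset.range i, ((s : ℂ) - r) := by
        refine Finset.prod_congr rfl fun r hr => ?_
        simp only [Finset.mem_range] at hr
        rw [Nat.cast_sub (by omega)]

lemma coeff_PopPoly_eq_zero {N m : ℕ} (A : Fin (m + 1) → Matrix (Fin N) (Fin N) (Polynomial ℂ))
    (n' : ℤ) (hA : ∀ i, A i ≠ 0 → n' ≤ (i : ℤ) - matDeg (A i))
    (u : Fin N → Polynomial ℂ) (s : ℕ)
    (hu : ∀ c a, s ≤ a → (u c).coeff a = 0)
    (t : ℕ) (ht : (s : ℤ) ≤ (t : ℤ) + n') (b : Fin N) :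
    ((PopPoly A u) b).coeff t = 0 := by
  rw [PopPoly_apply, Polynomial.finset_sum_coeff]
  refine Finset.sum_eq_zero fun i _ => ?_
  rw [Polynomial.finset_sum_coeff]
  refine Finset.sum_eq_zero fun c _ => ?_
  by_cases h0 : A i = 0
  · simp [h0]
  rw [Polynomial.coeff_mul]
  refine Finset.sum_eq_zero fun x hx => ?_
  rw [Finset.HasAntidiagonal.mem_antidiagonal] at hx
  by_cases hc : (A i b c).coeff x.1 = 0
  · rw [hc, zero_mul]
  have h1 : x.1 ≤ matDeg (A i) :=
    le_trans (Polynomial.le_natDegree_of_ne_zero hc)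
      (Finset.le_sup (f := fun p : Fin N × Fin N => ((A i) p.1 p.2).natDegree)
        (Finset.mem_univ (b, c)))
  have h2 := hA i h0
  rw [coeff_iter_deriv, hu c (x.2 + (i : ℕ)) (by omega), mul_zero, mul_zero]

lemma Dmat_apply {N m : ℕ} (A : Fin (m + 1) → Matrix (Fin N) (Fin N) (Polynomial ℂ))
    (n' : ℤ) (k : ℂ) (b c : Fin N) :
    Dmat A n' k b c = ∑ j : Fin (m + 1),
      if A j ≠ 0 ∧ (j : ℤ) - matDeg (A j) = n' then
        (∏ r ∈ Finset.range (j : ℕ), (k - r)) * leadMat (A j) b c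
      else 0 := by
  classical
  simp only [Dmat, Matrix.sum_apply]
  refine Finset.sum_congr rfl fun j _ => ?_
  split_ifs with h
  · simp [Matrix.smul_apply]
  · simp

lemma coeff_PopPoly_top {N m : ℕ} (A : Fin (m + 1) → Matrix (Fin N) (Fin N) (Polynomial ℂ))
    (n' : ℤ) (hA : ∀ i, A i ≠ 0 → n' ≤ (i : ℤ) - matDeg (A i))
    (u : Fin N → Polynomial ℂ) (s t : ℕ)
    (hu : ∀ c a, s < a → (u c).coeff a = 0)
    (ht : (t : ℤ) = (s : ℤ) - n') (b : Fin N) :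
    ((PopPoly A u) b).coeff t = ∑ c, Dmat A n' (s : ℂ) b c * (u c).coeff s := by
  classical
  rw [PopPoly_apply, Polynomial.finset_sum_coeff]
  have hrhs : ∑ c, Dmat A n' (s : ℂ) b c * (u c).coeff s
      = ∑ i : Fin (m + 1), ∑ c,
          (if A i ≠ 0 ∧ (i : ℤ) - matDeg (A i) = n' then
            (∏ r ∈ Finset.range (i : ℕ), ((s : ℂ) - r)) * leadMat (A i) b c
          else 0) * (u c).coeff s := by
    rw [Finset.sum_comm]
    refine Finset.sum_congr rfl fun c _ => ?_
    rw [Dmat_apply, Finset.sum_mul]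
  rw [hrhs]
  refine Finset.sum_congr rfl fun i _ => ?_
  rw [Polynomial.finset_sum_coeff]
  refine Finset.sum_congr rfl fun c _ => ?_
  by_cases h0 : A i = 0
  · simp [h0]
  by_cases hJ : (i : ℤ) - matDeg (A i) = n'
  · rw [if_pos ⟨h0, hJ⟩]
    by_cases his : (i : ℕ) ≤ s
    · have hd : matDeg (A i) ≤ t := by omega
      rw [Polynomial.coeff_mul]
      rw [Finset.sum_eq_single (matDeg (A i), t - matDeg (A i))]
      · rw [coeff_iter_deriv]
        rw [show t - matDeg (A i) + (i : ℕ) = s by omega]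
        rw [show t - matDeg (A i) = s - (i : ℕ) by omega]
        rw [prod_shift s i his]
        show (A i b c).coeff (matDeg (A i)) * _ = _
        rw [show leadMat (A i) b c = (A i b c).coeff (matDeg (A i)) from rfl]
        ring
      · intro x hx hne
        rw [Finset.HasAntidiagonal.mem_antidiagonal] at hx
        by_cases hc : (A i b c).coeff x.1 = 0
        · rw [hc, zero_mul]
        have h1 : x.1 ≤ matDeg (A i) :=
          le_trans (Polynomial.le_natDegree_of_ne_zero hc)
            (Finset.le_sup (f := fun p : Fin N × Fin N => ((A i) p.1 p.2).natDegree)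
              (Finset.mem_univ (b, c)))
        have h1' : x.1 ≠ matDeg (A i) := by
          intro h
          apply hne
          have : x.2 = t - matDeg (A i) := by omega
          exact Prod.ext h this
        rw [coeff_iter_deriv, hu c (x.2 + (i : ℕ)) (by omega), mul_zero, mul_zero]
      · intro hmem
        exact absurd (Finset.HasAntidiagonal.mem_antidiagonal.mpr (by omega)) hmem
    · have hz : (∏ r ∈ Finset.range (i : ℕ), ((s : ℂ) - r)) = 0 :=
        Finset.prod_eq_zero (i := s) (Finset.mem_range.mpr (by omega)) (by simp)
      rw [hz, zero_mul, zero_mul, Polynomial.coeff_mul]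
      refine Finset.sum_eq_zero fun x hx => ?_
      rw [coeff_iter_deriv, hu c (x.2 + (i : ℕ)) (by omega), mul_zero, mul_zero]
  · rw [if_neg (by tauto), zero_mul, Polynomial.coeff_mul]
    refine Finset.sum_eq_zero fun x hx => ?_
    rw [Finset.HasAntidiagonal.mem_antidiagonal] at hx
    by_cases hc : (A i b c).coeff x.1 = 0
    · rw [hc, zero_mul]
    have h1 : x.1 ≤ matDeg (A i) :=
      le_trans (Polynomial.le_natDegree_of_ne_zero hc)
        (Finset.le_sup (f := fun p : Fin N × Fin N => ((A i) p.1 p.2).natDegree)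
          (Finset.mem_univ (b, c)))
    have h2 := hA i h0
    rw [coeff_iter_deriv, hu c (x.2 + (i : ℕ)) (by omega), mul_zero, mul_zero]

def Wsub (N : ℕ) (s : ℕ) : Submodule ℂ (Fin N → Polynomial ℂ) :=
  Submodule.pi Set.univ (fun _ => Polynomial.degreeLT ℂ s)

lemma mem_Wsub {N s : ℕ} {u : Fin N → Polynomial ℂ} :
    u ∈ Wsub N s ↔ ∀ b a, s ≤ a → (u b).coeff a = 0 := by
  simp only [Wsub, Submodule.mem_pi, Set.mem_univ, forall_true_left,
    Polynomial.mem_degreeLT, Polynomial.degree_lt_iff_coeff_zero]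

def WsubEquiv (N s : ℕ) : Wsub N s ≃ₗ[ℂ] (Fin N → Polynomial.degreeLT ℂ s) where
  toFun u := fun b => ⟨u.1 b, u.2 b (Set.mem_univ b)⟩
  map_add' _ _ := rfl
  map_smul' _ _ := rfl
  invFun v := ⟨fun b => (v b).1, fun b _ => (v b).2⟩
  left_inv _ := rfl
  right_inv _ := rfl

instance degreeLT_fd (s : ℕ) : FiniteDimensional ℂ (Polynomial.degreeLT ℂ s) :=
  Module.Finite.equiv (Polynomial.degreeLTEquiv ℂ s).symm

instance Wsub_fd (N s : ℕ) : FiniteDimensional ℂ (Wsub N s) :=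
  Module.Finite.equiv (WsubEquiv N s).symm

lemma finrank_Wsub (N s : ℕ) : Module.finrank ℂ (Wsub N s) = N * s := by
  rw [(WsubEquiv N s).finrank_eq, Module.finrank_pi_fintype]
  have : Module.finrank ℂ (Polynomial.degreeLT ℂ s) = s := by
    rw [(Polynomial.degreeLTEquiv ℂ s).finrank_eq]
    simp
  simp [this, Finset.sum_const, Finset.card_univ]

lemma exists_k0 {N m : ℕ} (A : Fin (m + 1) → Matrix (Fin N) (Fin N) (Polynomial ℂ))
    (n' : ℤ) (hd : ∃ k : ℂ, (Dmat A n' k).det ≠ 0) :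
    ∃ k₀ : ℕ, n' ≤ (k₀ : ℤ) ∧ 1 ≤ k₀ ∧ ∀ s : ℕ, k₀ ≤ s → (Dmat A n' (s : ℂ)).det ≠ 0 := by
  classical
  set Dp : Matrix (Fin N) (Fin N) (Polynomial ℂ) := Matrix.of fun b c =>
    ∑ j : Fin (m + 1),
      if A j ≠ 0 ∧ (j : ℤ) - matDeg (A j) = n' then
        (∏ r ∈ Finset.range (j : ℕ), (Polynomial.X - Polynomial.C (r : ℂ)))
          * Polynomial.C (leadMat (A j) b c)
      else 0 with hDp
  have hev : ∀ k : ℂ, Dmat A n' k = Dp.map (Polynomial.evalRingHom k) := by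
    intro k
    ext b c
    rw [Dmat_apply]
    simp only [Matrix.map_apply, hDp, Matrix.of_apply, Polynomial.eval_finset_sum,
      Polynomial.coe_evalRingHom]
    refine Finset.sum_congr rfl fun j _ => ?_
    split_ifs with h
    · simp [Polynomial.eval_prod]
    · simp
  have hdet : ∀ k : ℂ, (Dmat A n' k).det = Polynomial.eval k Dp.det := by
    intro k
    rw [hev k]
    simpa [RingHom.mapMatrix_apply] using (RingHom.map_det (Polynomial.evalRingHom k) Dp).symm
  obtain ⟨k, hk⟩ := hd
  have hq : Dp.det ≠ 0 := by
    intro h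
    rw [hdet, h, Polynomial.eval_zero] at hk
    exact hk rfl
  have hfin : {x : ℂ | Dp.det.IsRoot x}.Finite := Polynomial.finite_setOf_isRoot hq
  have hfin2 : {s : ℕ | Polynomial.eval ((s : ℕ) : ℂ) Dp.det = 0}.Finite := by
    have : {s : ℕ | Polynomial.eval ((s : ℕ) : ℂ) Dp.det = 0}
        = (fun s : ℕ => (s : ℂ)) ⁻¹' {x : ℂ | Dp.det.IsRoot x} := rfl
    rw [this]
    exact Set.Finite.preimage (Set.injOn_of_injective Nat.cast_injective) hfin
  obtain ⟨B, hB⟩ := hfin2.bddAbove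
  refine ⟨B + 1 + n'.toNat, by omega, by omega, fun s hs h => ?_⟩
  have : s ∈ {s : ℕ | Polynomial.eval ((s : ℕ) : ℂ) Dp.det = 0} := by
    simp only [Set.mem_setOf_eq, ← hdet, h]
  have := hB this
  omega

lemma mem_W_of_P {N m : ℕ} (hN : 1 ≤ N)
    (A : Fin (m + 1) → Matrix (Fin N) (Fin N) (Polynomial ℂ)) (n' : ℤ)
    (hA : ∀ i, A i ≠ 0 → n' ≤ (i : ℤ) - matDeg (A i))
    (k₀ t₀ : ℕ) (hk₀ : ∀ s : ℕ, k₀ ≤ s → (Dmat A n' (s : ℂ)).det ≠ 0)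
    (h1 : 1 ≤ k₀) (hn'k : n' ≤ (k₀ : ℤ)) (ht₀ : (t₀ : ℤ) = (k₀ : ℤ) - n')
    (u : Fin N → Polynomial ℂ) (hu : PopPoly A u ∈ Wsub N t₀) : u ∈ Wsub N k₀ := by
  by_contra hcon
  rw [mem_Wsub] at hcon
  push_neg at hcon
  obtain ⟨b, a, hka, hab⟩ := hcon
  have hne : Nonempty (Fin N) := ⟨⟨0, hN⟩⟩
  set s : ℕ := Finset.univ.sup (fun c : Fin N => (u c).natDegree) with hs
  have hks : k₀ ≤ s := by
    refine le_trans (le_trans hka (Polynomial.le_natDegree_of_ne_zero hab)) ?_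
    exact Finset.le_sup (f := fun c : Fin N => (u c).natDegree) (Finset.mem_univ b)
  have hva : ∀ c a', s < a' → (u c).coeff a' = 0 := by
    intro c a' ha'
    exact Polynomial.coeff_eq_zero_of_natDegree_lt
      (lt_of_le_of_lt (Finset.le_sup (f := fun c : Fin N => (u c).natDegree)
        (Finset.mem_univ c)) ha')
  set v : Fin N → ℂ := fun c => (u c).coeff s with hv
  have hvne : v ≠ 0 := by
    obtain ⟨c, _, hc⟩ := Finset.exists_mem_eq_sup Finset.univ Finset.univ_nonempty
      (fun c : Fin N => (u c).natDegree)
    have huc : u c ≠ 0 := by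
      intro h
      rw [← hs] at hc
      rw [h, Polynomial.natDegree_zero] at hc
      omega
    intro h
    have : v c = 0 := congrFun h c
    rw [hv] at this
    simp only at this
    rw [← hs] at hc
    rw [hc] at this
    exact Polynomial.leadingCoeff_ne_zero.mpr huc this
  set t : ℕ := (s - n').toNat with htdef
  have ht : (t : ℤ) = (s : ℤ) - n' := by omega
  have htt : t₀ ≤ t := by omega
  have hz : ∀ b' : Fin N, ((PopPoly A u) b').coeff t = 0 := fun b' =>
    mem_Wsub.mp hu b' t htt
  have hmv : (Dmat A n' (s : ℂ)).mulVec v = 0 := by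
    funext b'
    have := coeff_PopPoly_top A n' hA u s t hva ht b'
    rw [hz b'] at this
    simp only [Matrix.mulVec, dotProduct, Pi.zero_apply]
    exact this.symm
  exact hvne (Matrix.eq_zero_of_mulVec_eq_zero (hk₀ s hks) hmv)

lemma sup_range_W_eq_top {N m : ℕ}
    (A : Fin (m + 1) → Matrix (Fin N) (Fin N) (Polynomial ℂ)) (n' : ℤ)
    (hA : ∀ i, A i ≠ 0 → n' ≤ (i : ℤ) - matDeg (A i))
    (k₀ t₀ : ℕ) (hk₀ : ∀ s : ℕ, k₀ ≤ s → (Dmat A n' (s : ℂ)).det ≠ 0)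
    (hn'k : n' ≤ (k₀ : ℤ)) (ht₀ : (t₀ : ℤ) = (k₀ : ℤ) - n') :
    LinearMap.range (PopPoly A) ⊔ Wsub N t₀ = ⊤ := by
  have step : ∀ d : ℕ, ∀ w : Fin N → Polynomial ℂ, w ∈ Wsub N (t₀ + d) →
      w ∈ LinearMap.range (PopPoly A) ⊔ Wsub N t₀ := by
    intro d
    induction d with
    | zero => exact fun w hw => Submodule.mem_sup_right hw
    | succ d ih =>
      intro w hw
      set σ : ℕ := t₀ + d with hσ
      set s' : ℕ := (σ + n').toNat with hs'def
      have hs' : (s' : ℤ) = (σ : ℤ) + n' := by omega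
      have hks' : k₀ ≤ s' := by omega
      set M : Matrix (Fin N) (Fin N) ℂ := Dmat A n' (s' : ℂ) with hM
      have hMu : IsUnit M.det := isUnit_iff_ne_zero.mpr (hk₀ s' hks')
      set v : Fin N → ℂ := fun c => (w c).coeff σ with hv
      set y : Fin N → ℂ := M⁻¹.mulVec v with hy
      have hMy : M.mulVec y = v := by
        rw [hy, Matrix.mulVec_mulVec, Matrix.mul_nonsing_inv _ hMu, Matrix.one_mulVec]
      set u : Fin N → Polynomial ℂ := fun c => Polynomial.C (y c) * Polynomial.X ^ s' with hudef
      have hucoeff : ∀ c a, (u c).coeff a = if a = s' then y c else 0 := by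
        intro c a
        simp [hudef, Polynomial.coeff_C_mul, Polynomial.coeff_X_pow, mul_ite]
      have hutop : ∀ c a, s' + 1 ≤ a → (u c).coeff a = 0 := by
        intro c a ha
        rw [hucoeff, if_neg (by omega)]
      have hPσ : ∀ b, ((PopPoly A u) b).coeff σ = v b := by
        intro b
        rw [coeff_PopPoly_top A n' hA u s' σ
          (fun c a ha => hutop c a (by omega)) (by omega) b]
        have : ∀ c, (u c).coeff s' = y c := fun c => by rw [hucoeff, if_pos rfl]
        simp only [this]
        rw [← hMy]
        simp [Matrix.mulVec, dotProduct, hM]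
      have hPW : ∀ b a, σ + 1 ≤ a → ((PopPoly A u) b).coeff a = 0 := by
        intro b a ha
        exact coeff_PopPoly_eq_zero A n' hA u (s' + 1) hutop a (by omega) b
      have hdiff : w - PopPoly A u ∈ Wsub N (t₀ + d) := by
        rw [mem_Wsub]
        intro b a ha
        simp only [Pi.sub_apply, Polynomial.coeff_sub]
        rcases eq_or_lt_of_le ha with h | h
        · rw [← h, hPσ b, hv]
          simp [hσ]
        · rw [mem_Wsub.mp hw b a (by omega), hPW b a (by omega), sub_zero]
      have := ih _ hdiff
      have hw' : w = (w - PopPoly A u) + PopPoly A u := by ring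
      rw [hw']
      exact Submodule.add_mem _ this
        (Submodule.mem_sup_left (LinearMap.mem_range_self _ u))
  rw [eq_top_iff]
  intro w _
  refine step (Finset.univ.sup (fun c : Fin N => (w c).natDegree) + 1) w ?_
  rw [mem_Wsub]
  intro b a ha
  have h1 : (w b).natDegree ≤ Finset.univ.sup (fun c : Fin N => (w c).natDegree) :=
    Finset.le_sup (f := fun c : Fin N => (w c).natDegree) (Finset.mem_univ b)
  exact Polynomial.coeff_eq_zero_of_natDegree_lt (by omega)

set_option synthInstance.maxHeartbeats 1000000 in
set_option maxHeartbeats 2000000 in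
theorem polynomial_index_aux {N m : ℕ} (hN : 1 ≤ N)
    (A : Fin (m + 1) → Matrix (Fin N) (Fin N) (Polynomial ℂ))
    (n' : ℤ)
    (hn'_lb : ∀ i, A i ≠ 0 → n' ≤ (i : ℤ) - matDeg (A i))
    (hd : ∃ k : ℂ, (Dmat A n' k).det ≠ 0) :
    FiniteDimensional ℂ (LinearMap.ker (PopPoly A)) ∧
      FiniteDimensional ℂ ((Fin N → Polynomial ℂ) ⧸ LinearMap.range (PopPoly A)) ∧
      (Module.finrank ℂ (LinearMap.ker (PopPoly A)) : ℤ) -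
          Module.finrank ℂ ((Fin N → Polynomial ℂ) ⧸ LinearMap.range (PopPoly A)) =
        N * n' := by
  classical
  obtain ⟨k₀, hn'k, h1k, hk₀⟩ := exists_k0 A n' hd
  set t₀ : ℕ := (k₀ - n').toNat with ht₀def
  have ht₀ : (t₀ : ℤ) = (k₀ : ℤ) - n' := by omega
  set P := PopPoly A with hPdef
  set T := Wsub N t₀ with hTdef
  set K := Wsub N k₀ with hKdef
  haveI hTfd : FiniteDimensional ℂ T := Wsub_fd N t₀
  haveI hKfd : FiniteDimensional ℂ K := Wsub_fd N k₀
  have hKT : ∀ u ∈ K, P u ∈ T := by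
    intro u hu
    rw [hTdef, mem_Wsub]
    intro b a ha
    exact coeff_PopPoly_eq_zero A n' hn'_lb u k₀ (mem_Wsub.mp hu) a (by omega) b
  have hkey : ∀ u, P u ∈ T → u ∈ K := fun u hu =>
    mem_W_of_P hN A n' hn'_lb k₀ t₀ hk₀ h1k hn'k ht₀ u hu
  have hker : LinearMap.ker P ≤ K := by
    intro u hu
    apply hkey
    rw [LinearMap.mem_ker.mp hu]
    exact Submodule.zero_mem T
  have hmap : Submodule.map P K = LinearMap.range P ⊓ T := by
    apply le_antisymm
    · rintro _ ⟨u, hu, rfl⟩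
      exact Submodule.mem_inf.mpr ⟨LinearMap.mem_range_self _ u, hKT u hu⟩
    · rintro w hw
      obtain ⟨⟨u, rfl⟩, hw2⟩ := Submodule.mem_inf.mp hw
      exact Submodule.mem_map.mpr ⟨u, hkey u hw2, rfl⟩
  have hsup : LinearMap.range P ⊔ T = ⊤ :=
    sup_range_W_eq_top A n' hn'_lb k₀ t₀ hk₀ hn'k ht₀
  have hkerfd : FiniteDimensional ℂ (LinearMap.ker P) :=
    Module.Finite.equiv (Submodule.comapSubtypeEquivOfLe hker)
  set f : T →ₗ[ℂ] (Fin N → Polynomial ℂ) ⧸ LinearMap.range P :=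
    (LinearMap.range P).mkQ ∘ₗ T.subtype with hf
  have hfsurj : Function.Surjective f := by
    intro q
    obtain ⟨x, rfl⟩ := Submodule.mkQ_surjective _ q
    have hx : x ∈ LinearMap.range P ⊔ T := hsup ▸ Submodule.mem_top
    obtain ⟨y, hy, z, hz, rfl⟩ := Submodule.mem_sup.mp hx
    refine ⟨⟨z, hz⟩, ?_⟩
    simp only [hf, LinearMap.comp_apply, Submodule.subtype_apply, Submodule.mkQ_apply]
    rw [Submodule.Quotient.eq]
    simpa using hy
  have hcokfd : FiniteDimensional ℂ ((Fin N → Polynomial ℂ) ⧸ LinearMap.range P) :=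
    Module.Finite.of_surjective f hfsurj
  have hkerf : LinearMap.ker f = Submodule.comap T.subtype (LinearMap.range P ⊓ T) := by
    ext x
    simp only [hf, LinearMap.mem_ker, LinearMap.comp_apply, Submodule.subtype_apply,
      Submodule.mkQ_apply, Submodule.Quotient.mk_eq_zero, Submodule.mem_comap,
      Submodule.mem_inf]
    exact ⟨fun h => ⟨h, x.2⟩, fun h => h.1⟩
  have e1 : Module.finrank ℂ (Submodule.map P K) + Module.finrank ℂ (LinearMap.ker P)
      = N * k₀ := by
    have h := LinearMap.finrank_range_add_finrank_ker (P.domRestrict K)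
    have ha : Module.finrank ℂ (LinearMap.range (P.domRestrict K))
        = Module.finrank ℂ (Submodule.map P K) := by
      rw [LinearMap.range_domRestrict]
    have hb : Module.finrank ℂ (LinearMap.ker (P.domRestrict K))
        = Module.finrank ℂ (LinearMap.ker P) := by
      rw [LinearMap.ker_domRestrict]
      exact (Submodule.comapSubtypeEquivOfLe hker).finrank_eq
    rw [ha, hb] at h
    rw [h]
    exact finrank_Wsub N k₀
  have e2 : Module.finrank ℂ ((Fin N → Polynomial ℂ) ⧸ LinearMap.range P)
      + Module.finrank ℂ (Submodule.map P K) = N * t₀ := by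
    have h := LinearMap.finrank_range_add_finrank_ker f
    have hrt : LinearMap.range f = ⊤ := LinearMap.range_eq_top.mpr hfsurj
    rw [hrt, finrank_top, hkerf] at h
    have h3 : Module.finrank ℂ (Submodule.comap T.subtype (LinearMap.range P ⊓ T))
        = Module.finrank ℂ (Submodule.map P K) := by
      rw [(Submodule.comapSubtypeEquivOfLe inf_le_right).finrank_eq, ← hmap]
    rw [h3] at h
    rw [h]
    exact finrank_Wsub N t₀
  refine ⟨hkerfd, hcokfd, ?_⟩
  have e3 : (k₀ : ℤ) - (t₀ : ℤ) = n' := by omega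
  have e1' := congrArg (Nat.cast : ℕ → ℤ) e1
  have e2' := congrArg (Nat.cast : ℕ → ℤ) e2
  push_cast at e1' e2'
  have : (N : ℤ) * n' = (N : ℤ) * k₀ - (N : ℤ) * t₀ := by
    rw [← mul_sub, e3]
  linarith

end IndexAux

/-- **Theorem 3.** If `l(k)` and `d(k)` are not identically zero, then
`P : ℂ[x]^N → ℂ[x]^N` has finite-dimensional kernel and cokernel, and its index is
`χ(P; ℂ[x]^N) = N·n' = N·min_{0 ≤ i ≤ m}(i - d°A_i)`. -/
theorem polynomial_index {N m : ℕ} (hN : 1 ≤ N)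
    (A : Fin (m + 1) → Matrix (Fin N) (Fin N) (Polynomial ℂ))
    (hAm : (A (Fin.last m)).det ≠ 0)
    (n n' : ℤ)
    (hn_ub : ∀ i, A i ≠ 0 → (i : ℤ) - matNu (A i) ≤ n)
    (hn_mem : ∃ i, A i ≠ 0 ∧ (i : ℤ) - matNu (A i) = n)
    (hn'_lb : ∀ i, A i ≠ 0 → n' ≤ (i : ℤ) - matDeg (A i))
    (hn'_mem : ∃ i, A i ≠ 0 ∧ (i : ℤ) - matDeg (A i) = n')
    (hl : ∃ k : ℂ, (Lmat A n k).det ≠ 0)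
    (hd : ∃ k : ℂ, (Dmat A n' k).det ≠ 0) :
    FiniteDimensional ℂ (LinearMap.ker (PopPoly A)) ∧
      FiniteDimensional ℂ ((Fin N → Polynomial ℂ) ⧸ LinearMap.range (PopPoly A)) ∧
      (Module.finrank ℂ (LinearMap.ker (PopPoly A)) : ℤ) -
          Module.finrank ℂ ((Fin N → Polynomial ℂ) ⧸ LinearMap.range (PopPoly A)) =
        N * n' := by
  exact polynomial_index_aux hN A n' hn'_lb hd
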